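/- arXiv:2008.09877 — 3 statements merged into one kernel-verified Lean document; each statement's English description precedes it below -/
import Mathlib

section
/- Let G be a finite undirected weighted graph on n vertices with positive edge weights, and let H be a t-light initialization of G (i.e., H contains for each vertex its t lightest incident edges, or all if degree ≤ t). Let P be a shortest path in G between u and v, and suppose ℓ edges of P are missing from H. Then there exists a set S of vertices with |S| ≥ c·t·ℓ (for an absolute constant c > 0) such that every vertex of S is joined by an edge of H of weight at most W_{u,v} to some vertex of P, where W_{u,v} is the maximum edge weight on P. -/
open Finset SimpleGraph
open scoped Classical

namespace AddSpanner

/-- Total weight of a walk. -/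
noncomputable def walkWeight {V : Type} (w : V → V → ℝ) {G : SimpleGraph V} :
    ∀ {u v : V}, G.Walk u v → ℝ
  | _, _, .nil => 0
  | u, _, .cons (v := x) _ q => w u x + walkWeight w q

/-- Maximum edge weight along a walk (0 for the trivial walk). -/
noncomputable def walkMaxW {V : Type} (w : V → V → ℝ) {G : SimpleGraph V} {u v : V}
    (p : G.Walk u v) : ℝ :=
  (p.darts.map fun d => w d.toProd.1 d.toProd.2).foldr max 0

/-- Weighted shortest-path distance (infimum over all walk weights). -/
noncomputable def wdist {V : Type} (G : SimpleGraph V) (w : V → V → ℝ) (u v : V) : ℝ :=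
  sInf {x | ∃ p : G.Walk u v, walkWeight w p = x}

/-- A walk is a shortest path if it is a path whose weight realizes the distance. -/
def IsShortestPath {V : Type} (G : SimpleGraph V) (w : V → V → ℝ) {u v : V}
    (p : G.Walk u v) : Prop :=
  p.IsPath ∧ walkWeight w p = wdist G w u v

/-- Number of `H`-neighbors of `x` reachable by an edge no heavier than the edge `{x,y}`. -/
noncomputable def lightDeg {V : Type} [Fintype V] (H : SimpleGraph V) (w : V → V → ℝ)
    (x y : V) : ℕ :=
  (Finset.univ.filter fun z => H.Adj x z ∧ w x z ≤ w x y).card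

/-- `H` is a `t`-light initialization of `G`: it is a subgraph which, for every vertex,
contains its `t` lightest incident edges (all of them if the degree is at most `t`);
equivalently, whenever an edge `{x,y}` of `G` is missing from `H`, vertex `x` already has at
least `t` incident `H`-edges of weight at most `w x y`. -/
def LightInit {V : Type} [Fintype V] (G H : SimpleGraph V) (w : V → V → ℝ) (t : ℝ) : Prop :=
  H ≤ G ∧ ∀ x y, G.Adj x y → ¬ H.Adj x y → t ≤ (lightDeg H w x y : ℝ)

/-- Number of edges of a graph. -/
noncomputable def numEdges {V : Type} (H : SimpleGraph V) : ℕ :=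
  Nat.card H.edgeSet

section Aux

variable {V : Type} {G : SimpleGraph V} {w : V → V → ℝ}

lemma walkWeight_cons {u x v : V} (h : G.Adj u x) (q : G.Walk x v) :
    walkWeight w (q.cons h) = w u x + walkWeight w q := rfl

lemma walkWeight_copy {u v u' v' : V} (p : G.Walk u v) (h1 : u = u') (h2 : v = v') :
    walkWeight w (p.copy h1 h2) = walkWeight w p := by subst h1; subst h2; rfl

lemma walkWeight_append {u x v : V} (p : G.Walk u x) (q : G.Walk x v) :
    walkWeight w (p.append q) = walkWeight w p + walkWeight w q := by
  induction p with
  | nil => simp [walkWeight]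
  | cons h p ih => rw [SimpleGraph.Walk.cons_append, walkWeight_cons, walkWeight_cons, ih]; ring

lemma walkWeight_nonneg (hw : ∀ x y, G.Adj x y → 0 < w x y) :
    ∀ {u v : V} (p : G.Walk u v), 0 ≤ walkWeight w p := by
  intro u v p
  induction p with
  | nil => exact le_refl _
  | cons h q ih => rw [walkWeight_cons]; have := hw _ _ h; linarith

lemma sumW_cons {u x v : V} (h : G.Adj u x) (q : G.Walk x v) (n : ℕ) :
    ∑ i ∈ Finset.range (n+1),
        w ((q.cons h).getVert i) ((q.cons h).getVert (i+1))
      = w u x + ∑ i ∈ Finset.range n, w (q.getVert i) (q.getVert (i+1)) := by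
  rw [Finset.sum_range_succ']
  simp [SimpleGraph.Walk.getVert_cons_succ, SimpleGraph.Walk.getVert_zero]
  ring

lemma walkWeight_eq_sum {u v : V} (p : G.Walk u v) :
    walkWeight w p = ∑ i ∈ Finset.range p.length, w (p.getVert i) (p.getVert (i+1)) := by
  induction p with
  | nil => simp [walkWeight]
  | cons h q ih =>
    rw [walkWeight_cons, SimpleGraph.Walk.length_cons, sumW_cons, ih]

lemma exists_prefix {u v : V} (p : G.Walk u v) :
    ∀ l, l ≤ p.length → ∃ q : G.Walk u (p.getVert l),
      walkWeight w q = ∑ i ∈ Finset.range l, w (p.getVert i) (p.getVert (i+1)) := by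
  induction p with
  | nil =>
    intro l hl
    obtain rfl : l = 0 := Nat.le_zero.mp hl
    exact ⟨(SimpleGraph.Walk.nil).copy rfl (by simp), by simp [walkWeight_copy, walkWeight]⟩
  | cons h q ih =>
    intro l hl
    match l with
    | 0 => exact ⟨(SimpleGraph.Walk.nil).copy rfl (by simp), by simp [walkWeight_copy, walkWeight]⟩
    | Nat.succ n =>
      obtain ⟨q1, hq1⟩ := ih n (by simpa using hl)
      refine ⟨(q1.cons h).copy rfl (SimpleGraph.Walk.getVert_cons_succ q h).symm, ?_⟩
      rw [walkWeight_copy, walkWeight_cons, sumW_cons, hq1]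

lemma exists_suffix {u v : V} (p : G.Walk u v) :
    ∀ r, r ≤ p.length → ∃ q : G.Walk (p.getVert r) v,
      walkWeight w q = walkWeight w p
        - ∑ i ∈ Finset.range r, w (p.getVert i) (p.getVert (i+1)) := by
  induction p with
  | nil =>
    intro r hr
    obtain rfl : r = 0 := Nat.le_zero.mp hr
    exact ⟨(SimpleGraph.Walk.nil).copy (by simp) rfl, by simp [walkWeight_copy, walkWeight]⟩
  | cons h q ih =>
    intro r hr
    match r with
    | 0 => exact ⟨((q.cons h)).copy (by simp) rfl, by simp [walkWeight_copy]⟩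
    | Nat.succ n =>
      obtain ⟨q2, hq2⟩ := ih n (by simpa using hr)
      refine ⟨q2.copy (SimpleGraph.Walk.getVert_cons_succ q h).symm rfl, ?_⟩
      rw [walkWeight_copy, hq2, sumW_cons, walkWeight_cons]
      ring

lemma wdist_le_walkWeight (hw : ∀ x y, G.Adj x y → 0 < w x y) {u v : V} (q : G.Walk u v) :
    wdist G w u v ≤ walkWeight w q := by
  apply csInf_le
  · exact ⟨0, by rintro x ⟨p, rfl⟩; exact walkWeight_nonneg hw p⟩
  · exact ⟨q, rfl⟩

end Aux
section Aux2

variable {V : Type} {G H : SimpleGraph V} {w : V → V → ℝ}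

/-- Key detour inequality: on a shortest path, the weight of the segment between
positions `l ≤ r` is at most the weight of a two-edge detour through `z`. -/
lemma key_detour (hw : ∀ x y, G.Adj x y → 0 < w x y) (hHG : H ≤ G)
    {u v : V} {p : G.Walk u v} (hsp : IsShortestPath G w p)
    {l r : ℕ} {z : V} (hlr : l ≤ r) (hrm : r ≤ p.length)
    (h1 : H.Adj (p.getVert l) z) (h2 : H.Adj z (p.getVert r)) :
    ∑ i ∈ Finset.Ico l r, w (p.getVert i) (p.getVert (i+1))
      ≤ w (p.getVert l) z + w z (p.getVert r) := by
  obtain ⟨q1, hq1⟩ := exists_prefix (w := w) p l (le_trans hlr hrm)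
  obtain ⟨q3, hq3⟩ := exists_suffix (w := w) p r hrm
  have a1 : G.Adj (p.getVert l) z := hHG h1
  have a2 : G.Adj z (p.getVert r) := hHG h2
  have hQ : wdist G w u v ≤ walkWeight w (q1.append ((q3.cons a2).cons a1)) :=
    wdist_le_walkWeight hw _
  rw [walkWeight_append, walkWeight_cons, walkWeight_cons, hq1, hq3, ← hsp.2] at hQ
  rw [Finset.sum_Ico_eq_sub _ hlr]
  linarith

lemma dartsW_eq {u v : V} (p : G.Walk u v) :
    (p.darts.map fun d => w d.toProd.1 d.toProd.2)
      = (List.range p.length).map (fun i => w (p.getVert i) (p.getVert (i+1))) := by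
  induction p with
  | nil => simp
  | cons h q ih =>
    rw [SimpleGraph.Walk.darts_cons, List.map_cons, ih, SimpleGraph.Walk.length_cons,
      List.range_succ_eq_map, List.map_cons, List.map_map]
    simp

lemma edges_eq {u v : V} (p : G.Walk u v) :
    p.edges = (List.range p.length).map (fun i => s(p.getVert i, p.getVert (i+1))) := by
  induction p with
  | nil => simp
  | cons h q ih =>
    rw [SimpleGraph.Walk.edges_cons, ih, SimpleGraph.Walk.length_cons,
      List.range_succ_eq_map, List.map_cons, List.map_map]
    simp

lemma le_foldr_max : ∀ (L : List ℝ) (a : ℝ), a ∈ L → a ≤ L.foldr max 0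
  | b :: L, a, ha => by
    rcases List.mem_cons.mp ha with rfl | ha
    · exact le_max_left _ _
    · exact le_trans (le_foldr_max L a ha) (le_max_right _ _)

lemma wf_le_walkMaxW {u v : V} (p : G.Walk u v) {i : ℕ} (hi : i < p.length) :
    w (p.getVert i) (p.getVert (i+1)) ≤ walkMaxW w p := by
  apply le_foldr_max
  rw [dartsW_eq]
  exact List.mem_map_of_mem (List.mem_range.mpr hi)

lemma getVert_mem_support {u v : V} (p : G.Walk u v) (n : ℕ) :
    p.getVert n ∈ p.support := by
  rcases le_or_gt n p.length with h | h
  · exact SimpleGraph.Walk.mem_support_iff_exists_getVert.mpr ⟨n, rfl, h⟩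
  · rw [SimpleGraph.Walk.getVert_of_length_le p h.le]
    exact SimpleGraph.Walk.end_mem_support p

end Aux2
section Aux3

lemma cover_card {ℓ : ℕ} {P : ℕ → Prop} [DecidablePred P]
    (h : ∀ a, a + 1 < ℓ → P a ∨ P (a+1)) :
    ℓ - 1 ≤ 2 * ((Finset.range ℓ).filter P).card := by
  set f : ℕ → ℕ := fun a => if P a then a else a + 1 with hf
  have himg : (Finset.range (ℓ-1)).image f ⊆ (Finset.range ℓ).filter P := by
    intro b hb
    obtain ⟨a, ha, rfl⟩ := Finset.mem_image.mp hb
    have ha' : a + 1 < ℓ := by have := Finset.mem_range.mp ha; omega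
    by_cases hPa : P a
    · simp only [hf, if_pos hPa]
      exact Finset.mem_filter.mpr ⟨Finset.mem_range.mpr (by omega), hPa⟩
    · have hP1 : P (a+1) := (h a ha').resolve_left hPa
      simp only [hf, if_neg hPa]
      exact Finset.mem_filter.mpr ⟨Finset.mem_range.mpr ha', hP1⟩
  have hcard : (Finset.range (ℓ-1)).card ≤ 2 * ((Finset.range (ℓ-1)).image f).card := by
    apply Finset.card_le_mul_card_image
    intro b _
    have hsub : (Finset.range (ℓ-1)).filter (fun x => f x = b) ⊆ {b, b - 1} := by
      intro x hx
      have hx' := (Finset.mem_filter.mp hx).2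
      have : x = b ∨ x + 1 = b := by
        by_cases hPx : P x
        · left; simpa [hf, hPx] using hx'
        · right; simpa [hf, hPx] using hx'
      simp only [Finset.mem_insert, Finset.mem_singleton]
      omega
    calc ((Finset.range (ℓ-1)).filter (fun x => f x = b)).card ≤ ({b, b-1} : Finset ℕ).card :=
          Finset.card_le_card hsub
      _ ≤ 2 := Finset.card_insert_le _ _ |>.trans (by simp)
  calc ℓ - 1 = (Finset.range (ℓ-1)).card := (Finset.card_range _).symm
    _ ≤ 2 * ((Finset.range (ℓ-1)).image f).card := hcard
    _ ≤ 2 * ((Finset.range ℓ).filter P).card := by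
        exact Nat.mul_le_mul_left 2 (Finset.card_le_card himg)

lemma exists_spread (E : Finset ℕ) :
    ∃ K : Finset ℕ, K ⊆ E ∧ E.card ≤ 3 * K.card ∧
      ∀ j ∈ K, ∀ k ∈ K, j < k → j + 3 ≤ k := by
  classical
  set L : List ℕ := E.sort (· ≤ ·) with hL
  have hlen : L.length = E.card := Finset.length_sort _
  have hsorted : L.Pairwise (· < ·) := (Finset.sortedLT_sort E).pairwise
  have hget : ∀ i j (hi : i < L.length) (hj : j < L.length), i < j →
      L.getD i 0 < L.getD j 0 := by
    intro i j hi hj hij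
    rw [List.getD_eq_getElem _ _ hi, List.getD_eq_getElem _ _ hj]
    exact List.pairwise_iff_getElem.mp hsorted i j hi hj hij
  have sgap : ∀ d a, a + d < L.length → L.getD a 0 + d ≤ L.getD (a+d) 0 := by
    intro d
    induction d with
    | zero => intro a _; simp
    | succ e ih =>
      intro a ha
      have h1 : a + e < L.length := by omega
      have h2 := ih a h1
      have h3 : L.getD (a+e) 0 < L.getD (a+e+1) 0 := hget _ _ h1 (by omega) (by omega)
      have h4 : a + (e+1) = a + e + 1 := rfl
      rw [h4]
      omega
  set n := E.card with hn
  set m3 := (n + 2) / 3 with hm3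
  have h3i : ∀ i, i < m3 → 3 * i < L.length := by intro i hi; rw [hlen]; omega
  set g : ℕ → ℕ := fun i => L.getD (3*i) 0 with hg
  have hgmono : ∀ i j, i < j → j < m3 → g i + 3 ≤ g j := by
    intro i j hij hj
    have h1 := sgap (3*(j-i)) (3*i) (by have := h3i j hj; omega)
    rw [show 3*i + 3*(j-i) = 3*j by omega] at h1
    show L.getD (3*i) 0 + 3 ≤ L.getD (3*j) 0
    omega
  refine ⟨(Finset.range m3).image g, ?_, ?_, ?_⟩
  · intro b hb
    obtain ⟨i, hi, rfl⟩ := Finset.mem_image.mp hb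
    have hi' := h3i i (Finset.mem_range.mp hi)
    have hmem : L.getD (3*i) 0 ∈ L := by
      rw [List.getD_eq_getElem _ _ hi']
      exact List.getElem_mem hi'
    exact (Finset.mem_sort _).mp hmem
  · have hcardK : ((Finset.range m3).image g).card = m3 := by
      rw [Finset.card_image_of_injOn, Finset.card_range]
      intro i hi j hj hij
      by_contra hne
      rcases Nat.lt_or_ge i j with h | h
      · have := hgmono i j h (Finset.mem_range.mp hj)
        omega
      · have h' : j < i := by omega
        have := hgmono j i h' (Finset.mem_range.mp hi)
        omega
    rw [hcardK]; omega
  · intro a ha b hb hab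
    obtain ⟨i, hi, rfl⟩ := Finset.mem_image.mp ha
    obtain ⟨j, hj, rfl⟩ := Finset.mem_image.mp hb
    rcases Nat.lt_or_ge i j with h | h
    · exact hgmono i j h (Finset.mem_range.mp hj)
    · rcases Nat.eq_or_lt_of_le h with rfl | h'
      · omega
      · have := hgmono j i h' (Finset.mem_range.mp hi)
        omega

end Aux3
end AddSpanner
open AddSpanner in
/-- if `ℓ` edges of a shortest path are missing from a `t`-light initialization
`H`, then some set `S` of at least `c·t·ℓ` vertices is joined by `H`-edges of weight at most
`W_{u,v}` to vertices of the path. -/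
theorem lots_of_light_neighbors :
    ∃ c : ℝ, 0 < c ∧
      ∀ (V : Type) [Fintype V] [DecidableEq V] (G H : SimpleGraph V) (w : V → V → ℝ),
        (∀ x y, G.Adj x y → 0 < w x y) → (∀ x y, w x y = w y x) →
        ∀ (t : ℝ), 0 < t → LightInit G H w t →
        ∀ (u v : V) (p : G.Walk u v), IsShortestPath G w p →
        ∀ ℓ : ℕ, ℓ = (p.edges.filter fun e => e ∉ H.edgeSet).length →
        ∃ S : Finset V, c * t * ℓ ≤ S.card ∧
          ∀ s ∈ S, ∃ x ∈ p.support, H.Adj s x ∧ w s x ≤ walkMaxW w p := by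
  refine ⟨1/12, by norm_num, ?_⟩
  intro V _ _ G H w hwpos hsym t ht hinit u v p hsp ℓ hℓ
  obtain ⟨hHG, hlight⟩ := hinit
  set m := p.length with hm
  set Wf : ℕ → ℝ := fun i => w (p.getVert i) (p.getVert (i+1)) with hWf
  have hWpos : ∀ i, i < m → 0 < Wf i := fun i hi => hwpos _ _ (p.adj_getVert_succ hi)
  set Q : ℕ → Prop := fun i => s(p.getVert i, p.getVert (i+1)) ∉ H.edgeSet with hQ
  set PL : List ℕ := (List.range m).filter (fun i => decide (Q i)) with hPL
  have hlen : ℓ = PL.length := by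
    rw [hℓ, edges_eq p, List.filter_map, List.length_map, hPL]
    congr 1
  have hsortedPL : PL.Pairwise (· < ·) := (List.pairwise_lt_range (n := m)).filter _
  set pos : ℕ → ℕ := fun k => PL.getD k 0 with hposdef
  have hposP : ∀ k, k < ℓ → pos k < m ∧ Q (pos k) := by
    intro k hk
    have hk' : k < PL.length := by omega
    have hmem : PL.getD k 0 ∈ PL := by
      rw [List.getD_eq_getElem _ _ hk']; exact List.getElem_mem hk'
    have h2 := List.mem_filter.mp hmem
    exact ⟨List.mem_range.mp h2.1, of_decide_eq_true h2.2⟩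
  have hposmono : ∀ j k, j < k → k < ℓ → pos j < pos k := by
    intro j k hjk hk
    have hk' : k < PL.length := by omega
    have hj' : j < PL.length := by omega
    show PL.getD j 0 < PL.getD k 0
    rw [List.getD_eq_getElem _ _ hj', List.getD_eq_getElem _ _ hk']
    exact List.pairwise_iff_getElem.mp hsortedPL j k hj' hk' hjk
  have hQk : ∀ k, k < ℓ → ¬ H.Adj (p.getVert (pos k)) (p.getVert (pos k + 1)) := by
    intro k hk hadj
    exact (hposP k hk).2 (H.mem_edgeSet.mpr hadj)
  have hGk : ∀ k, k < ℓ → G.Adj (p.getVert (pos k)) (p.getVert (pos k + 1)) :=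
    fun k hk => p.adj_getVert_succ (hposP k hk).1
  set CA : ℕ → Finset V := fun k => Finset.univ.filter
      (fun z => H.Adj (p.getVert (pos k)) z ∧
        w (p.getVert (pos k)) z ≤ w (p.getVert (pos k)) (p.getVert (pos k + 1))) with hCA
  set CN : ℕ → Finset V := fun k => Finset.univ.filter
      (fun z => H.Adj (p.getVert (pos k + 1)) z ∧
        w (p.getVert (pos k + 1)) z ≤ w (p.getVert (pos k + 1)) (p.getVert (pos k))) with hCN
  have hCAcard : ∀ k, k < ℓ → t ≤ ((CA k).card : ℝ) := by
    intro k hk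
    have h := hlight _ _ (hGk k hk) (hQk k hk)
    have he : (CA k).card = lightDeg H w (p.getVert (pos k)) (p.getVert (pos k + 1)) := by
      simp only [hCA, lightDeg]
    rw [he]
    exact h
  have hCNcard : ∀ k, k < ℓ → t ≤ ((CN k).card : ℝ) := by
    intro k hk
    have h := hlight _ _ (hGk k hk).symm (fun hadj => hQk k hk hadj.symm)
    have he : (CN k).card = lightDeg H w (p.getVert (pos k + 1)) (p.getVert (pos k)) := by
      simp only [hCN, lightDeg]
    rw [he]
    exact h
  set Ncond : ℕ → Prop := fun k => k + 1 < ℓ ∧ Wf (pos k) < Wf (pos (k+1)) with hNcond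
  set Acond : ℕ → Prop := fun k => 0 < k ∧ Wf (pos k) ≤ Wf (pos (k-1)) with hAcond
  set elig : ℕ → Prop := fun k => Ncond k ∨ Acond k with helig
  set C : ℕ → Finset V := fun k => if Ncond k then CN k else CA k with hC
  have hCcard : ∀ k, k < ℓ → t ≤ ((C k).card : ℝ) := by
    intro k hk
    by_cases hN : Ncond k
    · simp only [hC, if_pos hN]; exact hCNcard k hk
    · simp only [hC, if_neg hN]; exact hCAcard k hk
  have main_est : ∀ l r z, l ≤ r → r ≤ m → H.Adj (p.getVert l) z → H.Adj (p.getVert r) z →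
      ∑ i ∈ Finset.Ico l r, Wf i ≤ w (p.getVert l) z + w (p.getVert r) z := by
    intro l r z h1 h2 h3 h4
    have hk := key_detour hwpos hHG hsp h1 h2 h3 h4.symm
    rw [hsym z (p.getVert r)] at hk
    exact hk
  have sum_lb : ∀ (s : Finset ℕ) l r, s ⊆ Finset.Ico l r → r ≤ m →
      ∑ i ∈ s, Wf i ≤ ∑ i ∈ Finset.Ico l r, Wf i := by
    intro s l r hs hr
    apply Finset.sum_le_sum_of_subset_of_nonneg hs
    intro i hi _
    exact (hWpos i (lt_of_lt_of_le (Finset.mem_Ico.mp hi).2 hr)).le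
  have htriple : ∀ i1 i2 i3 : ℕ, i1 < i2 → i2 < i3 →
      ∑ i ∈ ({i1, i2, i3} : Finset ℕ), Wf i = Wf i1 + Wf i2 + Wf i3 := by
    intro i1 i2 i3 h12 h23
    rw [Finset.sum_insert (by simp only [Finset.mem_insert, Finset.mem_singleton]; omega),
      Finset.sum_insert (by simp only [Finset.mem_singleton]; omega),
      Finset.sum_singleton]
    ring
  have hpair : ∀ i1 i2 : ℕ, i1 < i2 →
      ∑ i ∈ ({i1, i2} : Finset ℕ), Wf i = Wf i1 + Wf i2 := by
    intro i1 i2 h12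
    rw [Finset.sum_insert (by simp only [Finset.mem_singleton]; omega), Finset.sum_singleton]
  -- membership of C k elements in the final statement
  have hmemS : ∀ k, k < ℓ → ∀ s ∈ C k,
      ∃ x ∈ p.support, H.Adj s x ∧ w s x ≤ walkMaxW w p := by
    intro k hk s hs
    have hWk : Wf (pos k) ≤ walkMaxW w p := wf_le_walkMaxW p (hposP k hk).1
    by_cases hN : Ncond k
    · simp only [hC, if_pos hN, hCN, Finset.mem_filter] at hs
      refine ⟨p.getVert (pos k + 1), getVert_mem_support p _, hs.2.1.symm, ?_⟩
      rw [hsym s (p.getVert (pos k + 1))]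
      refine le_trans hs.2.2 ?_
      rw [hsym (p.getVert (pos k + 1)) (p.getVert (pos k))]
      exact hWk
    · simp only [hC, if_neg hN, hCA, Finset.mem_filter] at hs
      refine ⟨p.getVert (pos k), getVert_mem_support p _, hs.2.1.symm, ?_⟩
      rw [hsym s (p.getVert (pos k))]
      exact le_trans hs.2.2 hWk
  -- disjointness
  have hdisj : ∀ j k, j < ℓ → k < ℓ → elig k → j + 3 ≤ k → Disjoint (C j) (C k) := by
    intro j k hj hk hek hjk
    rw [Finset.disjoint_left]
    intro z hzj hzk
    have hj1 : j + 1 < ℓ := by omega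
    have hk1 : k - 1 < ℓ := by omega
    have h_jj1 : pos j < pos (j+1) := hposmono _ _ (by omega) hj1
    have h_j1k1 : pos (j+1) < pos (k-1) := hposmono _ _ (by omega) hk1
    have h_k1k : pos (k-1) < pos k := hposmono _ _ (by omega) hk
    have hpkm : pos k < m := (hposP k hk).1
    have hWj1 : 0 < Wf (pos (j+1)) := hWpos _ (by have := (hposP _ hj1).1; omega)
    have hWk1 : 0 < Wf (pos (k-1)) := hWpos _ (by have := (hposP _ hk1).1; omega)
    by_cases hNj : Ncond j <;> by_cases hNk : Ncond k
    · -- N, N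
      simp only [hC, if_pos hNj, hCN, Finset.mem_filter] at hzj
      simp only [hC, if_pos hNk, hCN, Finset.mem_filter] at hzk
      have hest := main_est (pos j + 1) (pos k + 1) z (by omega) (by omega)
        hzj.2.1 hzk.2.1
      have hlow : Wf (pos (j+1)) + Wf (pos (k-1)) + Wf (pos k)
          ≤ ∑ i ∈ Finset.Ico (pos j + 1) (pos k + 1), Wf i := by
        rw [← htriple _ _ _ h_j1k1 h_k1k]
        apply sum_lb _ _ _ ?_ (by omega)
        intro i hi
        simp only [Finset.mem_insert, Finset.mem_singleton] at hi
        rw [Finset.mem_Ico]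
        rcases hi with rfl | rfl | rfl <;> omega
      have hb1 : w (p.getVert (pos j + 1)) z ≤ Wf (pos j) := by
        refine le_trans hzj.2.2 ?_
        rw [hsym (p.getVert (pos j + 1)) (p.getVert (pos j))]
      have hb2 : w (p.getVert (pos k + 1)) z ≤ Wf (pos k) := by
        refine le_trans hzk.2.2 ?_
        rw [hsym (p.getVert (pos k + 1)) (p.getVert (pos k))]
      have hcondj : Wf (pos j) < Wf (pos (j+1)) := hNj.2
      linarith
    · -- N, A
      have hAk : Acond k := hek.resolve_left hNk
      simp only [hC, if_pos hNj, hCN, Finset.mem_filter] at hzj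
      simp only [hC, if_neg hNk, hCA, Finset.mem_filter] at hzk
      have hest := main_est (pos j + 1) (pos k) z (by omega) (by omega)
        hzj.2.1 hzk.2.1
      have hlow : Wf (pos (j+1)) + Wf (pos (k-1))
          ≤ ∑ i ∈ Finset.Ico (pos j + 1) (pos k), Wf i := by
        rw [← hpair _ _ h_j1k1]
        apply sum_lb _ _ _ ?_ (by omega)
        intro i hi
        simp only [Finset.mem_insert, Finset.mem_singleton] at hi
        rw [Finset.mem_Ico]
        rcases hi with rfl | rfl <;> omega
      have hb1 : w (p.getVert (pos j + 1)) z ≤ Wf (pos j) := by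
        refine le_trans hzj.2.2 ?_
        rw [hsym (p.getVert (pos j + 1)) (p.getVert (pos j))]
      have hb2 : w (p.getVert (pos k)) z ≤ Wf (pos k) := hzk.2.2
      have hcondj : Wf (pos j) < Wf (pos (j+1)) := hNj.2
      have hcondk : Wf (pos k) ≤ Wf (pos (k-1)) := hAk.2
      linarith
    · -- A, N
      simp only [hC, if_neg hNj, hCA, Finset.mem_filter] at hzj
      simp only [hC, if_pos hNk, hCN, Finset.mem_filter] at hzk
      have hest := main_est (pos j) (pos k + 1) z (by omega) (by omega)
        hzj.2.1 hzk.2.1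
      have hlow : Wf (pos j) + Wf (pos (j+1)) + Wf (pos k)
          ≤ ∑ i ∈ Finset.Ico (pos j) (pos k + 1), Wf i := by
        rw [← htriple _ _ _ h_jj1 (by omega)]
        apply sum_lb _ _ _ ?_ (by omega)
        intro i hi
        simp only [Finset.mem_insert, Finset.mem_singleton] at hi
        rw [Finset.mem_Ico]
        rcases hi with rfl | rfl | rfl <;> omega
      have hb1 : w (p.getVert (pos j)) z ≤ Wf (pos j) := hzj.2.2
      have hb2 : w (p.getVert (pos k + 1)) z ≤ Wf (pos k) := by
        refine le_trans hzk.2.2 ?_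
        rw [hsym (p.getVert (pos k + 1)) (p.getVert (pos k))]
      linarith
    · -- A, A
      have hAk : Acond k := hek.resolve_left hNk
      simp only [hC, if_neg hNj, hCA, Finset.mem_filter] at hzj
      simp only [hC, if_neg hNk, hCA, Finset.mem_filter] at hzk
      have hest := main_est (pos j) (pos k) z (by omega) (by omega)
        hzj.2.1 hzk.2.1
      have hlow : Wf (pos j) + Wf (pos (j+1)) + Wf (pos (k-1))
          ≤ ∑ i ∈ Finset.Ico (pos j) (pos k), Wf i := by
        rw [← htriple _ _ _ h_jj1 h_j1k1]
        apply sum_lb _ _ _ ?_ (by omega)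
        intro i hi
        simp only [Finset.mem_insert, Finset.mem_singleton] at hi
        rw [Finset.mem_Ico]
        rcases hi with rfl | rfl | rfl <;> omega
      have hb1 : w (p.getVert (pos j)) z ≤ Wf (pos j) := hzj.2.2
      have hb2 : w (p.getVert (pos k)) z ≤ Wf (pos k) := hzk.2.2
      have hcondk : Wf (pos k) ≤ Wf (pos (k-1)) := hAk.2
      linarith
  -- case split on ℓ
  rcases Nat.lt_or_ge ℓ 2 with hl2 | hl2
  · rcases Nat.lt_or_ge ℓ 1 with hl1 | hl1
    · -- ℓ = 0
      have : ℓ = 0 := by omega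
      subst this
      refine ⟨∅, by norm_num, by simp⟩
    · -- ℓ = 1
      have hone : ℓ = 1 := by omega
      refine ⟨C 0, ?_, fun s hs => hmemS 0 (by omega) s hs⟩
      have := hCcard 0 (by omega)
      rw [hone]
      push_cast
      nlinarith [this]
  · have hcov : ∀ a, a + 1 < ℓ → elig a ∨ elig (a+1) := by
      intro a ha
      rcases lt_or_ge (Wf (pos a)) (Wf (pos (a+1))) with h | h
      · exact Or.inl (Or.inl ⟨ha, h⟩)
      · refine Or.inr (Or.inr ⟨Nat.succ_pos a, ?_⟩)
        simpa using h
    have hEcard : ℓ - 1 ≤ 2 * ((Finset.range ℓ).filter elig).card := cover_card hcov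
    obtain ⟨K, hKE, hKcard, hKgap⟩ := exists_spread ((Finset.range ℓ).filter elig)
    have hKfacts : ∀ k ∈ K, k < ℓ ∧ elig k := by
      intro k hk
      have := hKE hk
      rw [Finset.mem_filter, Finset.mem_range] at this
      exact this
    refine ⟨K.biUnion C, ?_, ?_⟩
    · have hdisjK : ∀ x ∈ K, ∀ y ∈ K, x ≠ y → Disjoint (C x) (C y) := by
        intro x hx y hy hxy
        rcases Nat.lt_or_ge x y with h | h
        · exact hdisj x y (hKfacts x hx).1 (hKfacts y hy).1 (hKfacts y hy).2
            (hKgap x hx y hy h)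
        · have h' : y < x := by omega
          exact (hdisj y x (hKfacts y hy).1 (hKfacts x hx).1 (hKfacts x hx).2
            (hKgap y hy x hx h')).symm
      have hcardU : (K.biUnion C).card = ∑ k ∈ K, (C k).card := Finset.card_biUnion hdisjK
      have hsum : (K.card : ℝ) * t ≤ ((K.biUnion C).card : ℝ) := by
        rw [hcardU]
        push_cast
        calc (K.card : ℝ) * t = ∑ _k ∈ K, t := by
              rw [Finset.sum_const, nsmul_eq_mul]
          _ ≤ ∑ k ∈ K, ((C k).card : ℝ) :=
              Finset.sum_le_sum (fun k hk => hCcard k (hKfacts k hk).1)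
      have hl12 : ℓ ≤ 12 * K.card := by omega
      have hcast : (ℓ : ℝ) ≤ 12 * (K.card : ℝ) := by exact_mod_cast hl12
      have h1 : (1:ℝ)/12 * t * ℓ ≤ (1:ℝ)/12 * t * (12 * K.card) := by
        apply mul_le_mul_of_nonneg_left hcast
        positivity
      calc (1:ℝ)/12 * t * ℓ ≤ (1:ℝ)/12 * t * (12 * K.card) := h1
        _ = (K.card : ℝ) * t := by ring
        _ ≤ ((K.biUnion C).card : ℝ) := hsum
    · intro s hs
      obtain ⟨k, hk, hsk⟩ := Finset.mem_biUnion.mp hs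
      exact hmemS k (hKfacts k hk).1 s hsk
end

section
/- Let G be a weighted undirected graph on n vertices and let H be a (2·n^ε·ln n)-light initialization of G, for 0 ≤ ε ≤ 1. Let S ⊆ V be formed by including each vertex independently with probability n^{-ε}. Then with probability at least 1 − 1/n, every vertex u with at least 2·n^ε·ln n neighbors in G has some (2·n^ε·ln n)-light neighbor belonging to S. -/
open Finset SimpleGraph
open scoped Classical

open AddSpanner MeasureTheory
open scoped NNReal ENNReal in
/-- sampling each vertex independently with probability `n^{-ε}`, with probability
at least `1 - 1/n` every vertex of degree at least `2 n^ε ln n` has a sampled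
`(2 n^ε ln n)`-light neighbor. -/
theorem light_dominating_set
    (V : Type) [Fintype V] [DecidableEq V] (n : ℕ) (hn : n = Fintype.card V) (hn1 : 1 ≤ n)
    (ε : ℝ) (hε0 : 0 ≤ ε) (hε1 : ε ≤ 1)
    (G H : SimpleGraph V) (w : V → V → ℝ)
    (hH : LightInit G H w (2 * (n : ℝ) ^ ε * Real.log n))
    (p : ℝ≥0∞) (hp : p = ENNReal.ofReal ((n : ℝ) ^ (-ε))) (hp1 : p ≤ 1) :
    1 - (1 : ℝ≥0∞) / n ≤
      (Measure.pi fun _ : V => (PMF.ofFintype (fun b => cond b p (1 - p)) (by simp [hp1])).toMeasure)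
        {f : V → Bool |
          ∀ u : V, 2 * (n : ℝ) ^ ε * Real.log n ≤ G.degree u →
            ∃ y : V, H.Adj u y ∧ f y = true} := by
  classical
  set t : ℝ := 2 * (n : ℝ) ^ ε * Real.log n with ht
  set ν := (PMF.ofFintype (fun b => cond b p (1 - p)) (by simp [hp1])).toMeasure with hν
  set μ := Measure.pi fun _ : V => ν with hμ
  have hn0 : (0:ℝ) < n := by exact_mod_cast hn1
  set r : ℝ := (n:ℝ) ^ (-ε) with hrdef
  have hr0 : 0 ≤ r := Real.rpow_nonneg hn0.le _
  have hr1 : r ≤ 1 :=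
    Real.rpow_le_one_of_one_le_of_nonpos (by exact_mod_cast hn1) (neg_nonpos.2 hε0)
  -- the bad events
  set C : V → Set (V → Bool) := fun u =>
    {f | t ≤ (G.degree u : ℝ) ∧ ∀ y, H.Adj u y → f y = false} with hC
  -- degree lower bound in H
  have hdeg : ∀ u, t ≤ (G.degree u : ℝ) → t ≤ (H.degree u : ℝ) := by
    intro u hu
    by_cases hall : ∀ y, G.Adj u y → H.Adj u y
    · refine hu.trans ?_
      have : G.neighborFinset u ⊆ H.neighborFinset u := by
        intro z hz
        rw [SimpleGraph.mem_neighborFinset] at *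
        exact hall z hz
      exact_mod_cast Finset.card_le_card this
    · push_neg at hall
      obtain ⟨y, hGy, hHy⟩ := hall
      refine (hH.2 u y hGy hHy).trans ?_
      have : (Finset.univ.filter fun z => H.Adj u z ∧ w u z ≤ w u y) ⊆ H.neighborFinset u := by
        intro z hz
        rw [Finset.mem_filter] at hz
        rw [SimpleGraph.mem_neighborFinset]
        exact hz.2.1
      exact_mod_cast Finset.card_le_card this
  have hfilter : ∀ u, Finset.univ.filter (fun y => H.Adj u y) = H.neighborFinset u := by
    intro u; ext z; simp [SimpleGraph.mem_neighborFinset]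
  -- bad events are pi-sets when the degree condition holds
  have hCpi : ∀ u, t ≤ (G.degree u : ℝ) → C u =
      Set.pi Set.univ (fun y => if H.Adj u y then ({false} : Set Bool) else Set.univ) := by
    intro u hu
    ext f
    simp only [hC, Set.mem_setOf_eq, Set.mem_pi, Set.mem_univ, forall_true_left, hu, true_and]
    refine forall_congr' fun y => ?_
    split <;> simp_all
  have hmeas : ∀ u, MeasurableSet (C u) := by
    intro u
    by_cases hu : t ≤ (G.degree u : ℝ)
    · rw [hCpi u hu]
      exact MeasurableSet.univ_pi fun y => by
        split
        · exact measurableSet_singleton _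
        · exact MeasurableSet.univ
    · have : C u = ∅ := by
        ext f; simp [hC, hu]
      rw [this]; exact MeasurableSet.empty
  have hνf : ν ({false} : Set Bool) = 1 - p := by
    rw [hν, PMF.toMeasure_apply_singleton _ _ (measurableSet_singleton _)]
    rfl
  -- measure of each bad event
  have hbound : ∀ u, μ (C u) ≤ (n:ℝ≥0∞)⁻¹ * (n:ℝ≥0∞)⁻¹ := by
    intro u
    by_cases hu : t ≤ (G.degree u : ℝ)
    · have hmeq : μ (C u) = (1 - p) ^ (H.degree u) := by
        rw [hCpi u hu, hμ, Measure.pi_pi]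
        have : ∀ y, ν (if H.Adj u y then ({false} : Set Bool) else Set.univ) =
            (if H.Adj u y then (1 - p) else 1) := by
          intro y; split
          · exact hνf
          · exact measure_univ
        rw [Finset.prod_congr rfl fun y _ => this y, Finset.prod_ite, Finset.prod_const,
          Finset.prod_const, one_pow, mul_one, hfilter, SimpleGraph.degree]
      rw [hmeq]
      set d := H.degree u with hd
      have hdt : t ≤ (d : ℝ) := hdeg u hu
      -- real estimate
      have hreal : (1 - r)^d ≤ (n:ℝ)⁻¹ * (n:ℝ)⁻¹ := by
        have h1 : (1 - r)^d ≤ Real.exp (-r) ^ d := by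
          apply pow_le_pow_left₀ (by linarith)
          linarith [Real.add_one_le_exp (-r)]
        have h2 : Real.exp (-r) ^ d = Real.exp ((d : ℝ) * (-r)) := (Real.exp_nat_mul _ d).symm
        have htr : t * r = 2 * Real.log n := by
          have hmul : (n:ℝ)^ε * (n:ℝ)^(-ε) = 1 := by
            rw [← Real.rpow_add hn0]; simp
          calc t * r = 2 * Real.log n * ((n:ℝ)^ε * (n:ℝ)^(-ε)) := by rw [ht, hrdef]; ring
          _ = 2 * Real.log n := by rw [hmul, mul_one]
        have h3 : 2 * Real.log n ≤ (d:ℝ) * r := by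
          rw [← htr]; exact mul_le_mul_of_nonneg_right hdt hr0
        have h4 : Real.exp ((d:ℝ) * (-r)) ≤ Real.exp (-(2 * Real.log n)) :=
          Real.exp_le_exp.2 (by nlinarith)
        have h5 : Real.exp (-(2 * Real.log n)) = (n:ℝ)⁻¹ * (n:ℝ)⁻¹ := by
          rw [show -(2*Real.log (n:ℝ)) = -Real.log (n:ℝ) + -Real.log (n:ℝ) by ring,
            Real.exp_add, Real.exp_neg, Real.exp_log hn0]
        calc (1 - r)^d ≤ Real.exp (-r) ^ d := h1
        _ = Real.exp ((d:ℝ) * (-r)) := h2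
        _ ≤ Real.exp (-(2 * Real.log n)) := h4
        _ = (n:ℝ)⁻¹ * (n:ℝ)⁻¹ := h5
      have h1p : (1 : ℝ≥0∞) - p = ENNReal.ofReal (1 - r) := by
        rw [hp, ENNReal.ofReal_sub 1 hr0, ENNReal.ofReal_one]
      calc (1 - p) ^ d = ENNReal.ofReal ((1 - r)^d) := by
            rw [h1p, ENNReal.ofReal_pow (by linarith)]
      _ ≤ ENNReal.ofReal ((n:ℝ)⁻¹ * (n:ℝ)⁻¹) := ENNReal.ofReal_le_ofReal hreal
      _ = (n:ℝ≥0∞)⁻¹ * (n:ℝ≥0∞)⁻¹ := by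
            rw [ENNReal.ofReal_mul (by positivity), ENNReal.ofReal_inv_of_pos hn0,
              ENNReal.ofReal_natCast]
    · have : C u = ∅ := by ext f; simp [hC, hu]
      rw [this]; simp
  -- union bound
  have hunion : μ (⋃ u, C u) ≤ 1 / (n : ℝ≥0∞) := by
    have hne : (n : ℝ≥0∞) ≠ 0 := by simpa using Nat.one_le_iff_ne_zero.mp hn1
    calc μ (⋃ u, C u) ≤ ∑' u, μ (C u) := measure_iUnion_le _
    _ ≤ ∑' _ : V, ((n:ℝ≥0∞)⁻¹ * (n:ℝ≥0∞)⁻¹) := ENNReal.tsum_le_tsum hbound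
    _ = (Fintype.card V : ℝ≥0∞) * ((n:ℝ≥0∞)⁻¹ * (n:ℝ≥0∞)⁻¹) := by
          rw [tsum_fintype, Finset.sum_const, Finset.card_univ, nsmul_eq_mul]
    _ = 1 / (n : ℝ≥0∞) := by
          rw [← hn, ← mul_assoc, ENNReal.mul_inv_cancel hne (ENNReal.natCast_ne_top n),
            one_mul, one_div]
  -- the good event contains the complement of the union of bad events
  have hsub : (⋃ u, C u)ᶜ ⊆
      {f : V → Bool | ∀ u : V, 2 * (n : ℝ) ^ ε * Real.log n ≤ G.degree u →
        ∃ y : V, H.Adj u y ∧ f y = true} := by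
    intro f hf u hu
    have hfu : f ∉ C u := fun h => hf (Set.mem_iUnion.2 ⟨u, h⟩)
    simp only [hC, Set.mem_setOf_eq, not_and, not_forall] at hfu
    obtain ⟨y, hy, hy2⟩ := hfu hu
    exact ⟨y, hy, by simpa using hy2⟩
  haveI : IsProbabilityMeasure μ := by
    rw [hμ]; infer_instance
  calc 1 - (1 : ℝ≥0∞) / n ≤ 1 - μ (⋃ u, C u) := tsub_le_tsub_left hunion 1
  _ = μ (⋃ u, C u)ᶜ := (prob_compl_eq_one_sub (MeasurableSet.iUnion hmeas)).symm
  _ ≤ _ := measure_mono hsub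
end

section
/- Let X be a random variable counting, with parameter p ∈ (0,1], the position of the first success in independent Bernoulli(p) trials truncated at m trials. If Bunch(v) consists of the edges incident to v strictly lighter than the edge to the nearest sampled vertex (where each vertex is sampled independently with probability p), then |Bunch(v)| is stochastically dominated by a geometric random variable with parameter p, hence E[|Bunch(v)|] ≤ 1/p, and with probability at least 1 − n^{−c}, |Bunch(v)| ≤ (c/p)·ln n. -/
open Finset SimpleGraph
open scoped Classical

open AddSpanner MeasureTheory
open scoped ENNReal in
/-- the bunch of a vertex — the set of its incident edges strictly lighter than
the edge to the nearest sampled vertex, the `m` incident edges being sorted by nondecreasing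
weight `ws` and each neighbor sampled independently with probability `p` — is stochastically
dominated by a geometric random variable with parameter `p`; hence its expected size is at most
`1/p`, and with probability at least `1 - n^{-c}` its size is at most `(c/p)·ln n`. -/
theorem bunch_size_geometric
    (n m : ℕ) (hn : 2 ≤ n) (c : ℝ) (hc : 1 ≤ c)
    (p : ℝ≥0∞) (hp0 : 0 < p) (hp1 : p ≤ 1)
    (ws : Fin m → ℝ) (hws : Monotone ws)
    (bunchCard : (Fin m → Bool) → ℕ)
    (hbunch : ∀ f, bunchCard f =
      (Finset.univ.filter fun k : Fin m => ∀ l : Fin m, f l = true → ws k < ws l).card)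
    (μ : Measure (Fin m → Bool))
    (hμ : μ = Measure.pi fun _ : Fin m => (PMF.bernoulli p.toNNReal (by simpa using ENNReal.toNNReal_mono ENNReal.one_ne_top hp1)).toMeasure) :
    (∀ k : ℕ, μ {f | k ≤ bunchCard f} ≤ (1 - p) ^ k) ∧
    (∫⁻ f, (bunchCard f : ℝ≥0∞) ∂μ ≤ p⁻¹) ∧
    1 - (n : ℝ≥0∞) ^ (-c) ≤ μ {f | (bunchCard f : ℝ) ≤ c / p.toReal * Real.log n} := by
  subst hμ
  set μ : Measure (Fin m → Bool) :=
    Measure.pi fun _ : Fin m => (PMF.bernoulli p.toNNReal (by simpa using ENNReal.toNNReal_mono ENNReal.one_ne_top hp1)).toMeasure with hμ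
  haveI : IsProbabilityMeasure μ := by rw [hμ]; infer_instance
  have hmeas : ∀ s : Set (Fin m → Bool), MeasurableSet s := fun s =>
    s.to_countable.measurableSet
  -- bunchCard is at most m
  have hNm : ∀ f, bunchCard f ≤ m := by
    intro f
    rw [hbunch]
    exact le_trans (Finset.card_filter_le _ _) (by simp)
  -- key inclusion: if the bunch has at least k elements, the k lightest neighbors are unsampled
  have hsub : ∀ (k : ℕ) (f : Fin m → Bool), k ≤ bunchCard f →
      ∀ i : Fin m, (i : ℕ) < k → f i = false := by
    intro k f hf i hi
    by_contra hfi
    have hfi' : f i = true := by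
      cases h : f i
      · exact absurd h hfi
      · rfl
    rw [hbunch] at hf
    have hS : (Finset.univ.filter fun j : Fin m => ∀ l, f l = true → ws j < ws l)
        ⊆ Finset.Iio i := by
      intro j hj
      simp only [Finset.mem_filter, Finset.mem_univ, true_and] at hj
      have hji := hj i hfi'
      rw [Finset.mem_Iio]
      by_contra h
      exact absurd (hws (not_lt.1 h)) (not_le.2 hji)
    have := Finset.card_le_card hS
    rw [Fin.card_Iio] at this
    omega
  -- measure of the cylinder event
  have hcyl : ∀ k : ℕ, k ≤ m →
      μ {f : Fin m → Bool | ∀ i : Fin m, (i : ℕ) < k → f i = false} = (1 - p) ^ k := by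
    intro k hk
    have hset : {f : Fin m → Bool | ∀ i : Fin m, (i : ℕ) < k → f i = false}
        = Set.pi Set.univ (fun i : Fin m =>
            if (i : ℕ) < k then ({false} : Set Bool) else Set.univ) := by
      ext f
      simp only [Set.mem_setOf_eq, Set.mem_pi, Set.mem_univ, forall_true_left]
      constructor
      · intro h i
        by_cases hi : (i : ℕ) < k
        · simp [hi, h i hi]
        · simp [hi]
      · intro h i hi
        have := h i
        simpa [hi] using this
    rw [hset, hμ, MeasureTheory.Measure.pi_pi]
    have hfalse : (PMF.bernoulli p.toNNReal (by simpa using ENNReal.toNNReal_mono ENNReal.one_ne_top hp1)).toMeasure {false} = 1 - p := by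
      rw [PMF.toMeasure_apply_singleton _ _ (measurableSet_singleton _)]
      simp [PMF.bernoulli, ENNReal.coe_toNNReal (hp1.trans_lt ENNReal.one_lt_top).ne]
    have hprod : ∀ i : Fin m,
        (PMF.bernoulli p.toNNReal (by simpa using ENNReal.toNNReal_mono ENNReal.one_ne_top hp1)).toMeasure
          (if (i : ℕ) < k then ({false} : Set Bool) else Set.univ)
        = if (i : ℕ) < k then 1 - p else 1 := by
      intro i
      by_cases hi : (i : ℕ) < k
      · simp only [if_pos hi]; exact hfalse
      · simp only [if_neg hi]; exact measure_univ
    simp only [hprod]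
    rw [Finset.prod_ite, Finset.prod_const, Finset.prod_const, one_pow, mul_one]
    congr 1
    have : (Finset.univ.filter fun i : Fin m => (i : ℕ) < k)
        = (Finset.univ : Finset (Fin k)).map (Fin.castLEEmb hk) := by
      ext i
      simp [Fin.castLEEmb, Fin.ext_iff, Fin.exists_iff]
    simp [this]
  -- Part 1: stochastic domination
  have part1 : ∀ k : ℕ, μ {f | k ≤ bunchCard f} ≤ (1 - p) ^ k := by
    intro k
    by_cases hk : k ≤ m
    · calc μ {f | k ≤ bunchCard f}
          ≤ μ {f : Fin m → Bool | ∀ i : Fin m, (i : ℕ) < k → f i = false} :=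
            measure_mono (fun f hf => hsub k f hf)
        _ = (1 - p) ^ k := hcyl k hk
    · have : {f : Fin m → Bool | k ≤ bunchCard f} = ∅ := by
        ext f
        simp only [Set.mem_setOf_eq, Set.mem_empty_iff_false, iff_false, not_le]
        exact lt_of_le_of_lt (hNm f) (not_le.1 hk)
      simp [this]
  refine ⟨part1, ?_, ?_⟩
  -- Part 2: expectation
  · have hpt : ∀ f, (bunchCard f : ℝ≥0∞) =
        ∑ k ∈ Finset.range m, {g | k < bunchCard g}.indicator (fun _ => (1 : ℝ≥0∞)) f := by
      intro f
      have hI : ∀ k, ({g | k < bunchCard g}.indicator (fun _ => (1 : ℝ≥0∞)) f)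
          = if k < bunchCard f then 1 else 0 := by
        intro k
        by_cases h : k < bunchCard f <;> simp [Set.indicator, h]
      simp only [hI]
      rw [Finset.sum_boole]
      have : (Finset.range m).filter (fun x => x < bunchCard f)
          = Finset.range (bunchCard f) := by
        ext x
        simp only [Finset.mem_filter, Finset.mem_range]
        have := hNm f
        omega
      simp [this]
    calc ∫⁻ f, (bunchCard f : ℝ≥0∞) ∂μ
        = ∫⁻ f, ∑ k ∈ Finset.range m,
            {g | k < bunchCard g}.indicator (fun _ => (1 : ℝ≥0∞)) f ∂μ := by
          simp only [hpt]
      _ = ∑ k ∈ Finset.range m,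
            ∫⁻ f, {g | k < bunchCard g}.indicator (fun _ => (1 : ℝ≥0∞)) f ∂μ :=
          MeasureTheory.lintegral_finset_sum _ (fun k _ =>
            (measurable_const.indicator (hmeas _)))
      _ = ∑ k ∈ Finset.range m, μ {g | k < bunchCard g} := by
          refine Finset.sum_congr rfl fun k _ => ?_
          rw [MeasureTheory.lintegral_indicator_const (hmeas _), one_mul]
      _ ≤ ∑ k ∈ Finset.range m, (1 - p) ^ (k + 1) := by
          refine Finset.sum_le_sum fun k _ => ?_
          have : {g : Fin m → Bool | k < bunchCard g} = {g | k + 1 ≤ bunchCard g} := by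
            ext g; simp only [Set.mem_setOf_eq]; omega
          rw [this]
          exact part1 (k + 1)
      _ ≤ ∑' k : ℕ, (1 - p) ^ (k + 1) := ENNReal.sum_le_tsum _
      _ = (1 - p) * p⁻¹ := by
          rw [ENNReal.tsum_geometric_add_one, ENNReal.sub_sub_cancel ENNReal.one_ne_top hp1]
      _ ≤ 1 * p⁻¹ := mul_le_mul_left tsub_le_self _
      _ = p⁻¹ := one_mul _
  -- Part 3: high-probability bound
  · have hpt : p ≠ ∞ := (hp1.trans_lt ENNReal.one_lt_top).ne
    have hq0 : 0 < p.toReal := ENNReal.toReal_pos hp0.ne' hpt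
    have hq1 : p.toReal ≤ 1 := by
      rw [← ENNReal.toReal_one]
      exact ENNReal.toReal_mono ENNReal.one_ne_top hp1
    have hn1 : (1 : ℝ) < (n : ℝ) := by exact_mod_cast (by omega : 1 < n)
    have hlogn : 0 < Real.log n := Real.log_pos hn1
    set T : ℝ := c / p.toReal * Real.log n with hT
    have hT0 : 0 ≤ T :=
      mul_nonneg (div_nonneg (by linarith) hq0.le) hlogn.le
    set k0 : ℕ := Nat.floor T + 1 with hk0
    have hTk0 : T ≤ (k0 : ℝ) := by
      have := Nat.lt_floor_add_one T
      push_cast [hk0]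
      linarith
    have hcomp : {f : Fin m → Bool | T < (bunchCard f : ℝ)} ⊆
        {f | k0 ≤ bunchCard f} := by
      intro f hf
      simp only [Set.mem_setOf_eq] at hf ⊢
      have : Nat.floor T < bunchCard f := (Nat.floor_lt hT0).2 hf
      omega
    have h2 : μ {f : Fin m → Bool | T < (bunchCard f : ℝ)} ≤ (1 - p) ^ k0 :=
      (measure_mono hcomp).trans (part1 k0)
    have npos : (0 : ℝ) < (n : ℝ) := by linarith
    have h3 : (1 - p) ^ k0 ≤ (n : ℝ≥0∞) ^ (-c) := by
      have h1p : (1 - p) = ENNReal.ofReal (1 - p.toReal) := by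
        rw [ENNReal.ofReal_sub _ ENNReal.toReal_nonneg, ENNReal.ofReal_one,
          ENNReal.ofReal_toReal hpt]
      have hqk : c * Real.log n ≤ p.toReal * k0 := by
        have hqT : p.toReal * T = c * Real.log n := by
          rw [hT]; field_simp
        nlinarith [mul_le_mul_of_nonneg_left hTk0 hq0.le]
      calc (1 - p) ^ k0
          = ENNReal.ofReal (1 - p.toReal) ^ k0 := by rw [h1p]
        _ ≤ ENNReal.ofReal (Real.exp (-p.toReal)) ^ k0 :=
            pow_le_pow_left' (ENNReal.ofReal_le_ofReal
              (by linarith [Real.add_one_le_exp (-p.toReal)])) k0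
        _ = ENNReal.ofReal (Real.exp (-p.toReal) ^ k0) :=
            (ENNReal.ofReal_pow (Real.exp_nonneg _) k0).symm
        _ = ENNReal.ofReal (Real.exp (-(p.toReal * k0))) := by
            rw [← Real.exp_nat_mul]
            ring_nf
        _ ≤ ENNReal.ofReal ((n : ℝ) ^ (-c)) := by
            apply ENNReal.ofReal_le_ofReal
            rw [Real.rpow_def_of_pos npos]
            apply Real.exp_le_exp.2
            nlinarith
        _ = (n : ℝ≥0∞) ^ (-c) := by
            rw [← ENNReal.ofReal_natCast, ENNReal.ofReal_rpow_of_pos npos]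
    rw [tsub_le_iff_right]
    have hcover : (Set.univ : Set (Fin m → Bool)) ⊆
        {f | (bunchCard f : ℝ) ≤ T} ∪ {f | T < (bunchCard f : ℝ)} := by
      intro f _
      rcases le_or_gt (bunchCard f : ℝ) T with h | h
      · exact Or.inl h
      · exact Or.inr h
    calc (1 : ℝ≥0∞) = μ Set.univ := measure_univ.symm
      _ ≤ μ ({f | (bunchCard f : ℝ) ≤ T} ∪ {f | T < (bunchCard f : ℝ)}) :=
          measure_mono hcover
      _ ≤ μ {f | (bunchCard f : ℝ) ≤ T} + μ {f | T < (bunchCard f : ℝ)} :=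
          measure_union_le _ _
      _ ≤ μ {f | (bunchCard f : ℝ) ≤ T} + (n : ℝ≥0∞) ^ (-c) :=
          add_le_add_right (h2.trans h3) _
end
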